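/- Let a < 0, γ > 0, α > 0, c = √(a² + γ), and k₃, k₄ constants with k₃ ≠ 0. Then p(t) = k₄·(k₃·e^{2ct} + 1)²·e^{−2ct} + (1 + αγ)·(k₃·e^{2ct} + 1)/(2c·k₃·e^{2ct}) solves the linear ODE ṗ = 2γ·x(t)·p − 2ap − 1 − αγ, where x(t) = (1/γ)·(a + c − 2c/(k₃·e^{2ct} + 1)). -/

import Mathlib

theorem stmt_6 (a γ α k₃ k₄ : ℝ) (ha : a < 0) (hγ : 0 < γ) (hα : 0 < α)
    (hk : k₃ ≠ 0) (c : ℝ) (hc : c = Real.sqrt (a ^ 2 + γ))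
    (x p : ℝ → ℝ)
    (hx : ∀ t, x t = (1 / γ) * (a + c - 2 * c / (k₃ * Real.exp (2 * c * t) + 1)))
    (hp : ∀ t, p t = k₄ * (k₃ * Real.exp (2 * c * t) + 1) ^ 2 * Real.exp (-(2 * c * t))
        + (1 + α * γ) * (k₃ * Real.exp (2 * c * t) + 1) / (2 * c * k₃ * Real.exp (2 * c * t))) :
    ∀ t, k₃ * Real.exp (2 * c * t) + 1 ≠ 0 →
      HasDerivAt p (2 * γ * x t * p t - 2 * a * p t - 1 - α * γ) t := by
  have hc2 : c ^ 2 = a ^ 2 + γ := by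
    rw [hc, Real.sq_sqrt (by positivity)]
  have hcpos : 0 < c := by
    rw [hc]; positivity
  intro t ht
  have hpe : p = fun s => k₄ * (k₃ * Real.exp (2 * c * s) + 1) ^ 2 * Real.exp (-(2 * c * s))
      + (1 + α * γ) * (k₃ * Real.exp (2 * c * s) + 1) / (2 * c * k₃ * Real.exp (2 * c * s)) :=
    funext hp
  have hE : (Real.exp (2 * c * t)) ≠ 0 := (Real.exp_pos _).ne'
  have hu : HasDerivAt (fun s : ℝ => Real.exp (2 * c * s)) (2 * c * Real.exp (2 * c * t)) t := by
    have h1 : HasDerivAt (fun s : ℝ => 2 * c * s) (2 * c) t := by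
      simpa using (hasDerivAt_id t).const_mul (2 * c)
    simpa [mul_comm] using h1.exp
  have hnu : HasDerivAt (fun s : ℝ => Real.exp (-(2 * c * s)))
      (-(2 * c) * Real.exp (-(2 * c * t))) t := by
    have h1 : HasDerivAt (fun s : ℝ => -(2 * c * s)) (-(2 * c)) t := by
      simpa using ((hasDerivAt_id t).const_mul (2 * c)).fun_neg
    simpa [mul_comm] using h1.exp
  have hA : HasDerivAt (fun s : ℝ => k₃ * Real.exp (2 * c * s) + 1)
      (k₃ * (2 * c * Real.exp (2 * c * t))) t := (hu.const_mul k₃).add_const 1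
  have hA2 := hA.pow 2
  have hT1 := ((hA2.mul hnu).const_mul k₄)
  have hNum := hA.const_mul (1 + α * γ)
  have hDen := hu.const_mul (2 * c * k₃)
  have hden : 2 * c * k₃ * Real.exp (2 * c * t) ≠ 0 := by
    simp [hcpos.ne', hk, hE]
  have hT2 := hNum.div hDen hden
  simp only [← mul_assoc] at hT1
  rw [hpe]
  convert (HasDerivAt.add hT1 hT2) using 1
  rotate_right
  rw [hx t]
  simp only [Real.exp_neg, Pi.pow_apply]
  push_cast
  have hγe : γ = c ^ 2 - a ^ 2 := by linarith
  field_simp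
  rw [hγe]
  ring
  case e'_8 =>
    ext s
    simp only [Pi.add_apply, Pi.div_apply, Pi.mul_apply, Pi.pow_apply]
    ring
  all_goals rfl
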